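/- Assume |c| < 1. If (x,y) ∈ B, then ‖gⁿ(x,y)‖ → +∞ as n → +∞ (that is, the norms of the backward iterates of (x,y) tend to infinity). -/

import Mathlib

variable {p : ℕ}

/-- The unique `f`-preimage map `g(u,v) = (v, (u - c)/v)`. -/
noncomputable def g [Fact p.Prime] (c : ℚ_[p]) (z : ℚ_[p] × ℚ_[p]) : ℚ_[p] × ℚ_[p] :=
  (z.2, (z.1 - c) / z.2)

/-- The set `Q` of points whose backward iterates are all defined. -/
def QSet [Fact p.Prime] (c : ℚ_[p]) : Set (ℚ_[p] × ℚ_[p]) :=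
  {z | ∀ n : ℕ, ((g c)^[n] z).2 ≠ 0}

/-- `‖(x,y)‖ = max(|x|,|y|)`. -/
noncomputable def pnorm [Fact p.Prime] (z : ℚ_[p] × ℚ_[p]) : ℝ := max ‖z.1‖ ‖z.2‖

/-- The backward filled Julia set `K⁻`. -/
def KMinus [Fact p.Prime] (c : ℚ_[p]) : Set (ℚ_[p] × ℚ_[p]) :=
  {z | z ∈ QSet c ∧ ∃ M : ℝ, ∀ n : ℕ, pnorm ((g c)^[n] z) ≤ M}

lemma aux_iter_fst [Fact p.Prime] (c : ℚ_[p]) (z : ℚ_[p] × ℚ_[p]) (n : ℕ) :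
    ((g c)^[n+1] z).1 = ((g c)^[n] z).2 := by
  rw [Function.iterate_succ_apply']; rfl

lemma aux_iter_snd [Fact p.Prime] (c : ℚ_[p]) (z : ℚ_[p] × ℚ_[p]) (n : ℕ) :
    ((g c)^[n+1] z).2 = (((g c)^[n] z).1 - c) / ((g c)^[n] z).2 := by
  rw [Function.iterate_succ_apply']; rfl

lemma aux_norm_ge_p [Fact p.Prime] {t : ℚ_[p]} (ht : 1 < ‖t‖) : (p : ℝ) ≤ ‖t‖ := by
  have ht0 : t ≠ 0 := by rintro rfl; simp at ht; linarith
  have hv := Padic.norm_eq_zpow_neg_valuation ht0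
  have hp1 : (1 : ℝ) < (p : ℝ) := by exact_mod_cast (Fact.out : p.Prime).one_lt
  rw [hv] at ht ⊢
  have h0 : (0:ℤ) < -t.valuation := by
    by_contra h
    push_neg at h
    have h2 : (p:ℝ) ^ (-t.valuation) ≤ (p:ℝ) ^ (0:ℤ) := zpow_le_zpow_right₀ hp1.le h
    rw [zpow_zero] at h2; linarith
  calc (p:ℝ) = (p:ℝ) ^ (1:ℤ) := (zpow_one _).symm
    _ ≤ (p:ℝ) ^ (-t.valuation) := zpow_le_zpow_right₀ hp1.le (by omega)

lemma aux_norm_sub_of_gt [Fact p.Prime] {a b : ℚ_[p]} (h : ‖b‖ < ‖a‖) : ‖a - b‖ = ‖a‖ := by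
  have hne : ‖a‖ ≠ ‖-b‖ := by rw [norm_neg]; exact ne_of_gt h
  rw [sub_eq_add_neg, Padic.add_eq_max_of_ne hne, norm_neg, max_eq_left h.le]

/-- One step: norm of the new second coordinate. -/
lemma aux_norm_snd [Fact p.Prime] (c : ℚ_[p]) (z : ℚ_[p] × ℚ_[p]) (n : ℕ) :
    ‖((g c)^[n+1] z).2‖ = ‖((g c)^[n] z).1 - c‖ / ‖((g c)^[n] z).2‖ := by
  rw [aux_iter_snd, norm_div]

/-- S-state propagation: if `‖x_j‖ ≤ 1 < ‖y_j‖` then two steps later the same holds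
with `‖y_{j+2}‖ ≥ ‖y_j‖²`. -/
lemma aux_sstep [Fact p.Prime] (c : ℚ_[p]) (hc : ‖c‖ < 1) (z : ℚ_[p] × ℚ_[p])
    (hQ : z ∈ QSet c) (j : ℕ)
    (h1 : ‖((g c)^[j] z).1‖ ≤ 1) (h2 : 1 < ‖((g c)^[j] z).2‖) :
    ‖((g c)^[j+2] z).1‖ ≤ 1 ∧ ‖((g c)^[j] z).2‖ ^ 2 ≤ ‖((g c)^[j+2] z).2‖ := by
  set B := ‖((g c)^[j] z).2‖ with hB
  have hy1 : ((g c)^[j+1] z).2 ≠ 0 := hQ (j+1)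
  have hBpos : (0:ℝ) < B := by linarith
  -- norm of y_{j+1}
  have hd : ‖((g c)^[j+1] z).2‖ ≤ 1 / B := by
    rw [aux_norm_snd]
    have hsub : ‖((g c)^[j] z).1 - c‖ ≤ 1 := by
      calc ‖((g c)^[j] z).1 - c‖ ≤ max ‖((g c)^[j] z).1‖ ‖(-c)‖ := by
            rw [sub_eq_add_neg]; exact Padic.nonarchimedean _ _
        _ ≤ 1 := by rw [norm_neg]; exact max_le h1 hc.le
    rw [← hB]
    gcongr
  have hdpos : 0 < ‖((g c)^[j+1] z).2‖ := norm_pos_iff.mpr hy1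
  constructor
  · rw [aux_iter_fst]
    refine hd.trans ?_
    rw [div_le_one hBpos]
    linarith
  · have hrw : ‖((g c)^[j+2] z).2‖ = B / ‖((g c)^[j+1] z).2‖ := by
      rw [aux_norm_snd, aux_iter_fst, aux_norm_sub_of_gt (hc.trans h2)]
    rw [hrw]
    have h1B : B / (1 / B) ≤ B / ‖((g c)^[j+1] z).2‖ :=
      div_le_div_of_nonneg_left hBpos.le hdpos hd
    have : B / (1 / B) = B ^ 2 := by
      field_simp
    linarith

/-- Entry: from the region where both norms exceed 1, the orbit reaches the S-state. -/
lemma aux_entry [Fact p.Prime] (c : ℚ_[p]) (hc : ‖c‖ < 1) (z : ℚ_[p] × ℚ_[p])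
    (hQ : z ∈ QSet c) :
    ∀ m : ℕ, ∀ n : ℕ, ‖((g c)^[n] z).1‖ * ‖((g c)^[n] z).2‖ ≤ (m : ℝ) →
      1 < ‖((g c)^[n] z).1‖ → 1 < ‖((g c)^[n] z).2‖ →
      ∃ N : ℕ, ‖((g c)^[N] z).1‖ ≤ 1 ∧ 1 < ‖((g c)^[N] z).2‖ := by
  intro m
  induction m using Nat.strong_induction_on with
  | _ m IH =>
    intro n hprod hx hy
    set X := ‖((g c)^[n] z).1‖ with hX
    set Y := ‖((g c)^[n] z).2‖ with hY
    have hypos : (0:ℝ) < Y := by linarith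
    have hsnd1 : ‖((g c)^[n+1] z).2‖ = X / Y := by
      rw [aux_norm_snd, aux_norm_sub_of_gt (hc.trans hx)]
    have hfst1 : ‖((g c)^[n+1] z).1‖ = Y := by rw [aux_iter_fst]
    by_cases hcase : X ≤ Y
    · -- the S-state is reached at n+2
      have hd1 : ‖((g c)^[n+1] z).2‖ ≤ 1 := by
        rw [hsnd1]; exact (div_le_one hypos).mpr hcase
      have hdpos : (0:ℝ) < ‖((g c)^[n+1] z).2‖ := norm_pos_iff.mpr (hQ (n+1))
      refine ⟨n+2, ?_, ?_⟩
      · rw [aux_iter_fst]; exact hd1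
      · rw [aux_norm_snd, aux_iter_fst, aux_norm_sub_of_gt (hc.trans hy)]
        exact (one_lt_div hdpos).mpr (lt_of_le_of_lt hd1 hy)
    · push_neg at hcase
      have hxy : 1 < X / Y := (one_lt_div hypos).mpr hcase
      have hp2 : (2:ℝ) ≤ Y := by
        have := aux_norm_ge_p hy
        have h2p : (2:ℝ) ≤ (p:ℝ) := by exact_mod_cast (Fact.out : p.Prime).two_le
        linarith
      have hXpos : (0:ℝ) < X := by linarith
      have h2X : 2 * X ≤ (m:ℝ) := by nlinarith
      have hm3 : 3 ≤ m := by
        have h2m : (2:ℝ) < (m:ℝ) := by nlinarith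
        have : 2 < m := by exact_mod_cast h2m
        omega
      have hcast : ((m - 1 : ℕ) : ℝ) = (m:ℝ) - 1 := by
        rw [Nat.cast_sub (by omega)]; norm_num
      refine IH (m-1) (by omega) (n+1) ?_ ?_ ?_
      · rw [hfst1, hsnd1, hcast]
        have : Y * (X / Y) = X := by field_simp
        rw [this]
        have hm2 : (2:ℝ) ≤ (m:ℝ) := by exact_mod_cast (by omega : 2 ≤ m)
        linarith
      · rw [hfst1]; exact hy
      · rw [hsnd1]; exact hxy

/-- If `|c| < 1` and `(x,y) ∈ B`, then `‖gⁿ(x,y)‖ → +∞`. -/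
theorem stmt6 [Fact p.Prime] (hodd : Odd p) (c : ℚ_[p]) (hc : ‖c‖ < 1) :
    ∀ z ∈ {z ∈ QSet c | 1 < ‖z.1‖ ∧ 1 < ‖z.2‖},
      Filter.Tendsto (fun n : ℕ => pnorm ((g c)^[n] z)) Filter.atTop Filter.atTop := by
  intro z hz
  obtain ⟨hQ, hx, hy⟩ := hz
  obtain ⟨N, hS1, hS2⟩ := aux_entry c hc z hQ ⌈‖z.1‖ * ‖z.2‖⌉₊ 0
    (by simpa using Nat.le_ceil (‖z.1‖ * ‖z.2‖)) (by simpa using hx) (by simpa using hy)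
  set b0 := ‖((g c)^[N] z).2‖ with hb0
  have hb01 : 1 < b0 := hS2
  have key : ∀ k : ℕ, ‖((g c)^[N+2*k] z).1‖ ≤ 1 ∧ b0 ^ (k+1) ≤ ‖((g c)^[N+2*k] z).2‖ := by
    intro k
    induction k with
    | zero => exact ⟨by simpa using hS1, by simp only [Nat.mul_zero, Nat.add_zero, zero_add, pow_one]; exact le_of_eq hb0⟩
    | succ k ih =>
      have h2 : 1 < ‖((g c)^[N+2*k] z).2‖ :=
        lt_of_lt_of_le (one_lt_pow₀ hb01 (Nat.succ_ne_zero k)) ih.2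
      obtain ⟨ha, hb⟩ := aux_sstep c hc z hQ (N+2*k) ih.1 h2
      have heq : N + 2*(k+1) = N + 2*k + 2 := by ring
      rw [heq]
      refine ⟨ha, ?_⟩
      calc b0 ^ (k+1+1) ≤ (b0 ^ (k+1)) ^ 2 := by
            rw [← pow_mul]; exact pow_le_pow_right₀ hb01.le (by omega)
        _ ≤ ‖((g c)^[N+2*k] z).2‖ ^ 2 := by
            have h0 : (0:ℝ) ≤ b0 ^ (k+1) := by positivity
            exact pow_le_pow_left₀ h0 ih.2 2
        _ ≤ ‖((g c)^[N+2*k+2] z).2‖ := hb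
  rw [Filter.tendsto_atTop]
  intro M
  obtain ⟨K, hK⟩ := pow_unbounded_of_one_lt M hb01
  rw [Filter.eventually_atTop]
  refine ⟨N + 2*K, fun m hm => ?_⟩
  set j := (m - N)/2 with hjdef
  have hj : m = N + 2*j ∨ m = N + 2*j + 1 := by omega
  have hjK : K ≤ j := by omega
  have hlow : b0 ^ (j+1) ≤ pnorm ((g c)^[m] z) := by
    rcases hj with h|h
    · rw [h]; exact le_trans (key j).2 (le_max_right _ _)
    · rw [h]
      have hfst : ((g c)^[N+2*j+1] z).1 = ((g c)^[N+2*j] z).2 := aux_iter_fst c z _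
      calc b0 ^ (j+1) ≤ ‖((g c)^[N+2*j] z).2‖ := (key j).2
        _ = ‖((g c)^[N+2*j+1] z).1‖ := by rw [hfst]
        _ ≤ pnorm ((g c)^[N+2*j+1] z) := le_max_left _ _
  have hmono : b0 ^ K ≤ b0 ^ (j+1) := pow_le_pow_right₀ hb01.le (by omega)
  linarith
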